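/- Suppose the directed graph G = (V,E) satisfies Condition S. Then for every F ⊆ V with |F| ≤ f, the unique source component S_F of G_F satisfies |S_F| ≥ 2f + 1 − |F|. -/

import Mathlib

/-- Edge relation of the induced subgraph `G_F` (both endpoints avoid `F`). -/
def stepRel {V : Type*} (E : V → V → Prop) (F : Set V) (a b : V) : Prop :=
  a ∉ F ∧ b ∉ F ∧ E a b

/-- `reachSet E F u`: vertices `w ∉ F` having a directed path (possibly trivial)
to `u` that uses only vertices outside `F`. -/
def reachSet {V : Type*} (E : V → V → Prop) (F : Set V) (u : V) : Set V :=
  {w | w ∉ F ∧ Relation.ReflTransGen (stepRel E F) w u}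

/-- `S` is a source component of the induced subgraph `G_F`: it is a strongly
connected component of `G_F` (an equivalence class of mutual reachability,
i.e. a maximal mutually-connected set), with no incoming edges of `G_F` from
vertices outside `S`. -/
def IsSourceComponent {V : Type*} (E : V → V → Prop) (F : Set V) (S : Set V) : Prop :=
  (∃ v ∉ F, S = {w | Relation.ReflTransGen (stepRel E F) v w ∧
                     Relation.ReflTransGen (stepRel E F) w v}) ∧
  ∀ a ∉ S, ∀ b ∈ S, ¬ stepRel E F a b

/-- Condition S: for every `F` with `|F| ≤ f`, the graph `G_F` has a unique
source component, and that source component has at least `f+1` vertices. -/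
def ConditionS {V : Type*} (E : V → V → Prop) (f : ℕ) : Prop :=
  ∀ F : Set V, F.ncard ≤ f →
    ∃ S : Set V, IsSourceComponent E F S ∧ f + 1 ≤ S.ncard ∧
      ∀ S' : Set V, IsSourceComponent E F S' → S' = S

open Relation

/-- Members of a source component avoid `F`. -/
lemma mem_source_not_mem {V : Type*} {E : V → V → Prop} {F S : Set V}
    (hS : IsSourceComponent E F S) {w : V} (hw : w ∈ S) : w ∉ F := by
  obtain ⟨⟨v, hv, rfl⟩, -⟩ := hS
  obtain ⟨h1, -⟩ := hw
  rcases h1.cases_tail with rfl | ⟨c, -, hc⟩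
  · exact hv
  · exact hc.2.1

/-- Inside every backward-reachability set there is a source component. -/
lemma exists_source_in_reach {V : Type*} [Fintype V] (E : V → V → Prop) (F : Set V)
    {b : V} (hb : b ∉ F) :
    ∃ S, IsSourceComponent E F S ∧ S ⊆ reachSet E F b := by
  obtain ⟨w, hw, hmin⟩ := Set.exists_min_image (reachSet E F b)
    (fun w => (reachSet E F w).ncard) (Set.toFinite _) ⟨b, hb, .refl⟩
  refine ⟨_, ⟨⟨w, hw.1, rfl⟩, ?_⟩, ?_⟩
  · rintro a ha b' ⟨hwb', hb'w⟩ hab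
    have haF : a ∉ F := hab.1
    have haw : ReflTransGen (stepRel E F) a w := (ReflTransGen.single hab).trans hb'w
    have hainb : a ∈ reachSet E F b := ⟨haF, haw.trans hw.2⟩
    have hsub : reachSet E F a ⊂ reachSet E F w := by
      constructor
      · rintro x ⟨hx, hxa⟩
        exact ⟨hx, hxa.trans haw⟩
      · intro hcon
        have hwmem : w ∈ reachSet E F a := hcon ⟨hw.1, .refl⟩
        exact ha ⟨hwmem.2, haw⟩
    have h1 := Set.ncard_lt_ncard hsub (Set.toFinite _)
    have h2 := hmin a hainb
    omega
  · rintro x ⟨hwx, hxw⟩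
    have hxF : x ∉ F := by
      rcases hxw.cases_head with rfl | ⟨c, hxc, -⟩
      · exact hw.1
      · exact hxc.1
    exact ⟨hxF, hxw.trans hw.2⟩

/-- Everything reaching a vertex of `S \ A` in `G_{F ∪ A}` lies in `S \ A`,
when `S` is a source component of `G_F` and `A ⊆ S`. -/
lemma reach_subset_diff {V : Type*} {E : V → V → Prop} {F A S : Set V}
    (hS : IsSourceComponent E F S) {b x : V} (hb : b ∈ S \ A)
    (hx : Relation.ReflTransGen (stepRel E (F ∪ A)) x b) : x ∈ S \ A := by
  induction hx using Relation.ReflTransGen.head_induction_on with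
  | refl => exact hb
  | @head y c hstep _ ih =>
    obtain ⟨hxFA, hcFA, hE⟩ := hstep
    have hxF : y ∉ F := fun h => hxFA (Or.inl h)
    have hxA : y ∉ A := fun h => hxFA (Or.inr h)
    have hcF : c ∉ F := mem_source_not_mem hS ih.1
    have hxS : y ∈ S := by
      by_contra hxS
      exact hS.2 _ hxS _ ih.1 ⟨hxF, hcF, hE⟩
    exact ⟨hxS, hxA⟩

theorem source_component_size_lower_bound {V : Type*} [Fintype V]
    (E : V → V → Prop) (f : ℕ) (hf : 0 < f) (hfn : f < Fintype.card V)
    (hCS : ConditionS E f) :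
    ∀ F : Set V, F.ncard ≤ f → ∀ S : Set V, IsSourceComponent E F S →
      2 * f + 1 - F.ncard ≤ S.ncard := by
  intro F hF S hSsrc
  obtain ⟨S₀, hS₀, hcard₀, huniq⟩ := hCS F hF
  have hSeq : S = S₀ := huniq S hSsrc
  have hcardS : f + 1 ≤ S.ncard := hSeq ▸ hcard₀
  obtain ⟨A, hAS, hAcard⟩ := Set.exists_subset_card_eq
    (show f - F.ncard ≤ S.ncard by omega)
  have hF' : (F ∪ A).ncard ≤ f := by
    have := Set.ncard_union_le F A
    omega
  have hdiff : (S \ A).ncard = S.ncard - A.ncard := Set.ncard_diff hAS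
  have hbne : (S \ A).Nonempty := by
    rw [← Set.ncard_pos]
    omega
  obtain ⟨b, hbSA⟩ := hbne
  have hbF' : b ∉ F ∪ A := by
    rintro (h | h)
    · exact mem_source_not_mem hSsrc hbSA.1 h
    · exact hbSA.2 h
  obtain ⟨T, hTsrc, hTsub⟩ := exists_source_in_reach E (F ∪ A) hbF'
  obtain ⟨S₁, hS₁, hcard₁, huniq₁⟩ := hCS (F ∪ A) hF'
  have hTcard : f + 1 ≤ T.ncard := huniq₁ T hTsrc ▸ hcard₁
  have hTSA : T ⊆ S \ A := fun x hx =>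
    reach_subset_diff hSsrc hbSA (hTsub hx).2
  have hle : T.ncard ≤ (S \ A).ncard := Set.ncard_le_ncard hTSA (Set.toFinite _)
  have hASle : A.ncard ≤ S.ncard := Set.ncard_le_ncard hAS (Set.toFinite _)
  omega
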